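/- Let φ : Ω × ℝⁿ → ℝ be continuous with ξ ↦ φ(x,ξ) a norm for each x, and let V ∈ (L^∞(Ω))ⁿ satisfy φ⁰(x,V(x)) > 1 on a set ω ⊂ Ω of positive Lebesgue measure. Then there exist a point z ∈ ω, a unit vector P ∈ ℝⁿ, ε > 0, and a measurable set Q ⊆ B(z,ε) ∩ ω of positive measure such that φ(y,P) < V(y)·P for all y ∈ Q. -/

import Mathlib

open MeasureTheory
open scoped RealInnerProductSpace ENNReal Topology

noncomputable section

abbrev Euc (n : ℕ) := EuclideanSpace ℝ (Fin n)

/-- `φ x` is a norm on `ℝⁿ`. -/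
def IsNormAt {n : ℕ} (φ : Euc n → Euc n → ℝ) (x : Euc n) : Prop :=
  (∀ ξ, 0 ≤ φ x ξ) ∧ (∀ ξ, φ x ξ = 0 ↔ ξ = 0) ∧
  (∀ (c : ℝ) (ξ), φ x (c • ξ) = |c| * φ x ξ) ∧
  (∀ ξ η, φ x (ξ + η) ≤ φ x ξ + φ x η)

/-- The dual norm `φ⁰(x,ξ) = sup {ξ·p : φ(x,p) ≤ 1}`. -/
def dualNorm {n : ℕ} (φ : Euc n → Euc n → ℝ) (x ξ : Euc n) : ℝ :=
  sSup {r | ∃ p : Euc n, φ x p ≤ 1 ∧ r = ⟪ξ, p⟫}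

/-- If `φ⁰(x,V(x)) > 1` on a set `ω` of positive measure, there are a point `z ∈ ω`,
a unit vector `P`, `ε > 0` and a positive-measure set `Q ⊆ B(z,ε) ∩ ω` on which
`φ(y,P) < V(y)·P`. -/
theorem stmt3 {n : ℕ} (Ω : Set (Euc n)) (hΩo : IsOpen Ω) (hΩb : Bornology.IsBounded Ω)
    (φ : Euc n → Euc n → ℝ)
    (hφc : ContinuousOn (fun q : Euc n × Euc n => φ q.1 q.2) (Ω ×ˢ Set.univ))
    (hnorm : ∀ x ∈ Ω, IsNormAt φ x)
    (V : Euc n → Euc n) (hVm : Measurable V) (C : ℝ) (hVb : ∀ x, ‖V x‖ ≤ C)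
    (ω : Set (Euc n)) (hωm : MeasurableSet ω) (hωΩ : ω ⊆ Ω) (hωpos : 0 < volume ω)
    (hbig : ∀ x ∈ ω, 1 < dualNorm φ x (V x)) :
    ∃ z ∈ ω, ∃ P : Euc n, ‖P‖ = 1 ∧ ∃ ε > (0:ℝ), ∃ Q ⊆ Metric.ball z ε ∩ ω,
      MeasurableSet Q ∧ 0 < volume Q ∧ ∀ y ∈ Q, φ y P < ⟪V y, P⟫ := by
  classical
  -- continuity of φ x · for x ∈ Ω
  have hφcx : ∀ x ∈ Ω, Continuous (fun ξ : Euc n => φ x ξ) := by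
    intro x hx
    rw [continuous_iff_continuousAt]
    intro ξ
    have hmem : Ω ×ˢ (Set.univ : Set (Euc n)) ∈ 𝓝 ((x, ξ) : Euc n × Euc n) :=
      (hΩo.prod isOpen_univ).mem_nhds ⟨hx, trivial⟩
    exact (hφc.continuousAt hmem).comp
      ((continuous_const.prodMk continuous_id).continuousAt)
  -- every point of ω has a good unit vector
  have key : ∀ x ∈ ω, ∃ P : Euc n, ‖P‖ = 1 ∧ φ x P < ⟪V x, P⟫ := by
    intro x hx
    obtain ⟨hpos, hzero, hhom, htri⟩ := hnorm x (hωΩ hx)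
    have hne : {r | ∃ p : Euc n, φ x p ≤ 1 ∧ r = ⟪V x, p⟫}.Nonempty := by
      refine ⟨⟪V x, (0:Euc n)⟫, 0, ?_, rfl⟩
      rw [(hzero 0).mpr rfl]; norm_num
    obtain ⟨r, ⟨p, hp1, rfl⟩, hr⟩ := exists_lt_of_lt_csSup hne (hbig x hx)
    have hpne : p ≠ 0 := by
      rintro rfl
      rw [inner_zero_right] at hr
      linarith
    have hppos : (0:ℝ) < ‖p‖ := norm_pos_iff.mpr hpne
    have hip : (0:ℝ) < ‖p‖⁻¹ := inv_pos.mpr hppos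
    refine ⟨‖p‖⁻¹ • p, ?_, ?_⟩
    · rw [norm_smul, Real.norm_eq_abs, abs_of_pos hip, inv_mul_cancel₀ hppos.ne']
    · rw [hhom, real_inner_smul_right, abs_of_pos hip]
      exact mul_lt_mul_of_pos_left (lt_of_le_of_lt hp1 hr) hip
  set S : Euc n → Set (Euc n) :=
    fun d => {x ∈ ω | φ x (‖d‖⁻¹ • d) < ⟪V x, ‖d‖⁻¹ • d⟫} with hS
  obtain ⟨D, hDc, hDd⟩ := TopologicalSpace.exists_countable_dense (Euc n)
  -- the S d for d ∈ D cover ω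
  have hcover : ω ⊆ ⋃ d ∈ D, S d := by
    intro x hx
    obtain ⟨P, hP1, hPlt⟩ := key x hx
    have hPne : P ≠ 0 := by
      intro h; rw [h, norm_zero] at hP1; norm_num at hP1
    have hn : ContinuousAt (fun q : Euc n => ‖q‖⁻¹ • q) P :=
      (continuous_norm.continuousAt.inv₀ (norm_ne_zero_iff.mpr hPne)).smul
        continuousAt_id
    have hcont : ContinuousAt
        (fun q : Euc n => φ x (‖q‖⁻¹ • q) - ⟪V x, ‖q‖⁻¹ • q⟫) P :=
      (((hφcx x (hωΩ hx)).continuousAt).comp hn).sub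
        (((continuous_const.inner continuous_id).continuousAt).comp hn)
    have hPP : ‖P‖⁻¹ • P = P := by rw [hP1, inv_one, one_smul]
    have hneg : (fun q : Euc n => φ x (‖q‖⁻¹ • q) - ⟪V x, ‖q‖⁻¹ • q⟫) P < 0 := by
      simp only [hPP]; linarith
    have h1 : {q : Euc n | φ x (‖q‖⁻¹ • q) - ⟪V x, ‖q‖⁻¹ • q⟫ < 0} ∈ 𝓝 P :=
      hcont.preimage_mem_nhds (Iio_mem_nhds hneg)
    obtain ⟨U, hUsub, hUo, hPU⟩ := mem_nhds_iff.mp h1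
    obtain ⟨d, hdD, hdU⟩ := hDd.exists_mem_open hUo ⟨P, hPU⟩
    have hd : φ x (‖d‖⁻¹ • d) < ⟪V x, ‖d‖⁻¹ • d⟫ := by
      have := hUsub hdU; simpa using sub_neg.mp this
    exact Set.mem_biUnion hdD ⟨hx, hd⟩
  -- some S d has positive measure
  have hposd : ∃ d ∈ D, 0 < volume (S d) := by
    by_contra h
    push_neg at h
    have h0 : volume (⋃ d ∈ D, S d) = 0 :=
      (measure_biUnion_null_iff hDc).mpr fun d hd =>
        le_antisymm (by simpa using h d hd) zero_le
    have hle : volume ω ≤ volume (⋃ d ∈ D, S d) := measure_mono hcover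
    rw [h0] at hle
    exact absurd (le_antisymm hle zero_le) hωpos.ne'
  obtain ⟨d, hdD, hSpos⟩ := hposd
  obtain ⟨z, hzS⟩ := nonempty_of_measure_ne_zero hSpos.ne'
  obtain ⟨hzω, hzlt⟩ := hzS
  have hdne : d ≠ 0 := by
    rintro rfl
    rw [smul_zero] at hzlt
    obtain ⟨hpos, hzero, hhom, htri⟩ := hnorm z (hωΩ hzω)
    rw [(hzero 0).mpr rfl, inner_zero_right] at hzlt
    exact lt_irrefl _ hzlt
  have hdpos : (0:ℝ) < ‖d‖ := norm_pos_iff.mpr hdne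
  set P : Euc n := ‖d‖⁻¹ • d with hPdef
  have hP1 : ‖P‖ = 1 := by
    rw [hPdef, norm_smul, Real.norm_eq_abs, abs_of_pos (inv_pos.mpr hdpos),
      inv_mul_cancel₀ hdpos.ne']
  -- measurability of S d
  have hf : ContinuousOn (fun x => φ x P) Ω :=
    hφc.comp (continuous_id.prodMk continuous_const).continuousOn
      fun x hx => ⟨hx, trivial⟩
  have hg : Measurable fun x => (⟪V x, P⟫ : ℝ) := hVm.inner measurable_const
  have hSeq : S d = ⋃ q : ℚ,
      ((Ω ∩ (fun x => φ x P) ⁻¹' Set.Iio (q:ℝ)) ∩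
        (ω ∩ (fun x => (⟪V x, P⟫ : ℝ)) ⁻¹' Set.Ioi (q:ℝ))) := by
    ext x
    simp only [hS, Set.mem_setOf_eq, Set.mem_iUnion, Set.mem_inter_iff,
      Set.mem_preimage, Set.mem_Iio, Set.mem_Ioi]
    constructor
    · rintro ⟨hxω, hxlt⟩
      obtain ⟨q, hq1, hq2⟩ := exists_rat_btwn hxlt
      exact ⟨q, ⟨hωΩ hxω, hq1⟩, hxω, hq2⟩
    · rintro ⟨q, ⟨-, hq1⟩, hxω, hq2⟩
      exact ⟨hxω, hq1.trans hq2⟩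
  have hSm : MeasurableSet (S d) := by
    rw [hSeq]
    exact MeasurableSet.iUnion fun q =>
      ((hf.isOpen_inter_preimage hΩo isOpen_Iio).measurableSet).inter
        (hωm.inter (hg measurableSet_Ioi))
  -- choose ε so that ω ⊆ ball z ε
  obtain ⟨ε, hε0, hεsub⟩ := hΩb.subset_ball_lt 0 z
  refine ⟨z, hzω, P, hP1, ε, hε0, S d, ?_, hSm, hSpos, fun y hy => hy.2⟩
  intro x hx
  exact ⟨hεsub (hωΩ hx.1), hx.1⟩
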